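/- Let 𝒢 and ℋ be two DAGs with the same skeleton G, and suppose that G is a tree. If the pair {𝒢, ℋ} is a shift or a split, then conv(c_𝒢, c_ℋ) is an edge of CIM_G. -/

import Mathlib

open Classical

/-- A DAG on vertex type `V`: a directed graph (adjacency relation) with no directed cycles. -/
structure DAG (V : Type) where
  adj : V → V → Prop
  acyclic : ∀ v, ¬ Relation.TransGen adj v v

namespace DAG

variable {V : Type}

/-- The skeleton of a DAG: the undirected graph obtained by forgetting directions. -/
def skeleton (D : DAG V) : SimpleGraph V where
  Adj i j := D.adj i j ∨ D.adj j i
  symm := by constructor; intro i j h; exact h.symm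
  loopless := by
    constructor
    intro i h
    rcases h with h | h <;> exact D.acyclic i (Relation.TransGen.single h)

/-- The characteristic imset of a DAG, as a vector indexed by finite vertex sets
(coordinates on sets of size `< 2` are identically zero). -/
noncomputable def imset (D : DAG V) (S : Finset V) : ℝ :=
  if 2 ≤ S.card ∧ ∃ i ∈ S, ∀ j ∈ S, j ≠ i → D.adj j i then 1 else 0

/-- `D.IsVStructure i j k` means `i → j ← k` is an induced subgraph of `D`
(`i` and `k` non-adjacent). -/
def IsVStructure (D : DAG V) (i j k : V) : Prop :=
  i ≠ k ∧ D.adj i j ∧ D.adj k j ∧ ¬ D.adj i k ∧ ¬ D.adj k i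

end DAG

/-- Two DAGs are Markov equivalent iff they have the same skeleton and the same
v-structures. -/
def MarkovEquiv {V : Type} (D E : DAG V) : Prop :=
  D.skeleton = E.skeleton ∧ ∀ i j k, D.IsVStructure i j k ↔ E.IsVStructure i j k

/-- An arrow `i → j` of `D` is essential if it occurs in every DAG Markov equivalent to `D`. -/
def DAG.Essential {V : Type} (D : DAG V) (i j : V) : Prop :=
  D.adj i j ∧ ∀ E : DAG V, MarkovEquiv D E → E.adj i j

/-- The characteristic imset polytope of an undirected graph `G`: the convex hull of the
characteristic imsets of all DAGs with skeleton `G`. -/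
noncomputable def CIM {V : Type} (G : SimpleGraph V) : Set (Finset V → ℝ) :=
  convexHull ℝ { f | ∃ D : DAG V, D.skeleton = G ∧ f = D.imset }

/-- `conv(u,v)` is an edge (one-dimensional face) of `P`: there is a linear functional whose
maximum over `P` is attained exactly on the segment from `u` to `v`. -/
def IsPolytopeEdge {E : Type*} [AddCommGroup E] [Module ℝ E] (P : Set E) (u v : E) : Prop :=
  u ≠ v ∧ ∃ φ : E →ₗ[ℝ] ℝ, (∀ x ∈ P, φ x ≤ φ u) ∧ ∀ x ∈ P, (φ x = φ u ↔ x ∈ segment ℝ u v)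

/-- `P` is a simplex of dimension `d`: the convex hull of `d+1` affinely independent points. -/
def IsSimplexOfDim {E : Type*} [AddCommGroup E] [Module ℝ E] (P : Set E) (d : ℕ) : Prop :=
  ∃ pts : Fin (d + 1) → E, AffineIndependent ℝ pts ∧ P = convexHull ℝ (Set.range pts)

/-- The standard basis vector indexed by `S`. -/
noncomputable def eVec {V : Type} (S : Finset V) : Finset V → ℝ :=
  fun T => if T = S then 1 else 0

/-- The pair `(D, E)` is a *shift*: there is a path `⟨i₀, …, i_{2m+1}⟩` in the skeleton such
that `c_E - ∑_{j odd} e_{{i_{j-1}, i_j, i_{j+1}}} = c_D - ∑_{j even} e_{{i_{j-1}, i_j, i_{j+1}}}`,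
with odd `j ∈ {1, 3, …, 2m-1}` and even `j ∈ {2, 4, …, 2m}`. -/
def IsShift {V : Type} (D E : DAG V) : Prop :=
  ∃ m : ℕ, 1 ≤ m ∧ ∃ π : ℕ → V,
    Set.InjOn π (Set.Iic (2 * m + 1)) ∧
    (∀ k < 2 * m + 1, D.skeleton.Adj (π k) (π (k + 1))) ∧
    E.imset - (∑ t ∈ Finset.range m, eVec ({π (2 * t), π (2 * t + 1), π (2 * t + 2)} : Finset V)) =
      D.imset - (∑ t ∈ Finset.range m, eVec ({π (2 * t + 1), π (2 * t + 2), π (2 * t + 3)} : Finset V))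

/-- The pair `(D, E)` is a *split*: there is a path `⟨i₀, …, i_{2m}⟩` in the skeleton such
that `c_E - ∑_{j odd} e_{{i_{j-1}, i_j, i_{j+1}}} = c_D - ∑_{j even} e_{{i_{j-1}, i_j, i_{j+1}}}`,
with odd `j ∈ {1, 3, …, 2m-1}` and even `j ∈ {2, 4, …, 2m-2}`. -/
def IsSplit {V : Type} (D E : DAG V) : Prop :=
  ∃ m : ℕ, 1 ≤ m ∧ ∃ π : ℕ → V,
    Set.InjOn π (Set.Iic (2 * m)) ∧
    (∀ k < 2 * m, D.skeleton.Adj (π k) (π (k + 1))) ∧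
    E.imset - (∑ t ∈ Finset.range m, eVec ({π (2 * t), π (2 * t + 1), π (2 * t + 2)} : Finset V)) =
      D.imset - (∑ t ∈ Finset.range (m - 1), eVec ({π (2 * t + 1), π (2 * t + 2), π (2 * t + 3)} : Finset V))


section Helpers

open Finset

lemma tree_no_triangle {V : Type} {G : SimpleGraph V} (h : G.IsAcyclic) {a b c : V}
    (hab : G.Adj a b) (hbc : G.Adj b c) (hac : G.Adj a c) : False := by
  rw [SimpleGraph.isAcyclic_iff_path_unique] at h
  have hnab : a ≠ b := hab.ne
  have hnbc : b ≠ c := hbc.ne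
  have hnac : a ≠ c := hac.ne
  have heq := h ⟨SimpleGraph.Walk.cons hac SimpleGraph.Walk.nil, by
      simp [SimpleGraph.Walk.isPath_def, hnac]⟩
    ⟨SimpleGraph.Walk.cons hab (SimpleGraph.Walk.cons hbc SimpleGraph.Walk.nil), by
      simp [SimpleGraph.Walk.isPath_def, hnab, hnac, hnbc]⟩
  have hl := congrArg (fun q : G.Path a c => q.1.length) heq
  simp at hl

lemma imset01 {V : Type} (D : DAG V) (S : Finset V) : D.imset S = 0 ∨ D.imset S = 1 := by
  unfold DAG.imset; split <;> simp

set_option maxHeartbeats 1000000 in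
lemma core_edge {p : ℕ} (G : SimpleGraph (Fin p)) (htree : G.IsTree)
    (D E : DAG (Fin p)) (hD : D.skeleton = G) (hE : E.skeleton = G)
    (n : ℕ) (hn : 1 ≤ n) (π : ℕ → Fin p)
    (hinj : Set.InjOn π (Set.Iic (n + 1)))
    (hadj : ∀ k < n + 1, G.Adj (π k) (π (k + 1)))
    (hDval : ∀ j ∈ Finset.Icc 1 n,
      D.imset {π (j - 1), π j, π (j + 1)} = if Even j then 1 else 0)
    (hEval : ∀ j ∈ Finset.Icc 1 n,
      E.imset {π (j - 1), π j, π (j + 1)} = if Odd j then 1 else 0)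
    (hoff : ∀ S : Finset (Fin p),
      (∀ j ∈ Finset.Icc 1 n, S ≠ {π (j - 1), π j, π (j + 1)}) → D.imset S = E.imset S)
    (wt : ℕ → ℝ) (M₀ : ℝ)
    (hModd : ∑ j ∈ (Finset.Icc 1 n).filter (fun j => Odd j), wt j = M₀)
    (hMeven : ∑ j ∈ (Finset.Icc 1 n).filter (fun j => Even j), wt j = M₀)
    (hbound : ∀ J ⊆ Finset.Icc 1 n, (∀ j ∈ J, j + 1 ∉ J) →
      (∑ j ∈ J, wt j ≤ M₀ ∧ (∑ j ∈ J, wt j = M₀ →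
        (∀ j ∈ Finset.Icc 1 n, j ∈ J ↔ Odd j) ∨ (∀ j ∈ Finset.Icc 1 n, j ∈ J ↔ Even j)))) :
    IsPolytopeEdge (CIM G) D.imset E.imset ∧ IsPolytopeEdge (CIM G) E.imset D.imset := by
  classical
  set T : ℕ → Finset (Fin p) := fun j => {π (j - 1), π j, π (j + 1)} with hT
  have hinj' : ∀ a b : ℕ, a ≤ n + 1 → b ≤ n + 1 → π a = π b → a = b := by
    intro a b ha hb hab
    exact hinj (Set.mem_Iic.2 ha) (Set.mem_Iic.2 hb) hab
  have hne3 : ∀ j ∈ Finset.Icc 1 n,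
      π (j - 1) ≠ π j ∧ π j ≠ π (j + 1) ∧ π (j - 1) ≠ π (j + 1) := by
    intro j hj
    rw [Finset.mem_Icc] at hj
    refine ⟨fun h => ?_, fun h => ?_, fun h => ?_⟩ <;>
      · have := hinj' _ _ (by omega) (by omega) h
        omega
  have hπadj : ∀ j ∈ Finset.Icc 1 n, G.Adj (π (j - 1)) (π j) ∧ G.Adj (π j) (π (j + 1)) := by
    intro j hj
    rw [Finset.mem_Icc] at hj
    constructor
    · have h := hadj (j - 1) (by omega)
      have : j - 1 + 1 = j := by omega
      rwa [this] at h
    · exact hadj j (by omega)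
  have hnoadj : ∀ j ∈ Finset.Icc 1 n, ¬ G.Adj (π (j - 1)) (π (j + 1)) := by
    intro j hj hadj'
    exact tree_no_triangle htree.IsAcyclic (hπadj j hj).1 (hπadj j hj).2 hadj'
  have hcollider : ∀ (A : DAG (Fin p)), A.skeleton = G → ∀ j ∈ Finset.Icc 1 n,
      A.imset (T j) = 1 → A.adj (π (j - 1)) (π j) ∧ A.adj (π (j + 1)) (π j) := by
    intro A hA j hj h1
    have hne := hne3 j hj
    unfold DAG.imset at h1
    split at h1
    case isFalse => norm_num at h1
    case isTrue hcond =>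
      obtain ⟨-, i, hiT, hpar⟩ := hcond
      have hmem : i = π (j - 1) ∨ i = π j ∨ i = π (j + 1) := by
        simpa [hT] using hiT
      have hm1 : π (j - 1) ∈ T j := by simp [hT]
      have hm2 : π j ∈ T j := by simp [hT]
      have hm3 : π (j + 1) ∈ T j := by simp [hT]
      rcases hmem with rfl | rfl | rfl
      · exfalso
        have hadj2 := hpar (π (j + 1)) hm3 hne.2.2.symm
        have : G.Adj (π (j + 1)) (π (j - 1)) := by
          rw [← hA]; exact Or.inl hadj2
        exact hnoadj j hj this.symm
      · exact ⟨hpar (π (j - 1)) hm1 hne.1, hpar (π (j + 1)) hm3 hne.2.1.symm⟩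
      · exfalso
        have hadj2 := hpar (π (j - 1)) hm1 hne.2.2
        have : G.Adj (π (j - 1)) (π (j + 1)) := by
          rw [← hA]; exact Or.inl hadj2
        exact hnoadj j hj this
  -- the linear functional
  set F : Finset (Finset (Fin p)) :=
    Finset.univ.filter (fun S => ∀ j ∈ Finset.Icc 1 n, S ≠ T j) with hF
  set φ : (Finset (Fin p) → ℝ) →ₗ[ℝ] ℝ :=
    (∑ j ∈ Finset.Icc 1 n, wt j • LinearMap.proj (T j)) +
      ∑ S ∈ F, (if D.imset S = 1 then (1 : ℝ) else -1) • LinearMap.proj S with hφdef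
  have hφ : ∀ c : Finset (Fin p) → ℝ, φ c =
      (∑ j ∈ Finset.Icc 1 n, wt j * c (T j)) +
        ∑ S ∈ F, (if D.imset S = 1 then (1 : ℝ) else -1) * c S := by
    intro c
    simp [hφdef, LinearMap.sum_apply, LinearMap.smul_apply, LinearMap.proj_apply,
      smul_eq_mul]
    refine Finset.sum_congr rfl fun S _ => ?_
    split <;> simp
  set N : ℝ := ∑ S ∈ F, D.imset S with hN
  set M : ℝ := M₀ + N with hM
  have hsgn : ∀ S : Finset (Fin p),
      (if D.imset S = 1 then (1 : ℝ) else -1) * D.imset S = D.imset S := by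
    intro S
    rcases imset01 D S with h | h <;> simp [h]
  have hφD : φ D.imset = M := by
    rw [hφ]
    have h1 : ∑ j ∈ Finset.Icc 1 n, wt j * D.imset (T j)
        = ∑ j ∈ (Finset.Icc 1 n).filter (fun j => Even j), wt j := by
      rw [Finset.sum_filter]
      refine Finset.sum_congr rfl fun j hj => ?_
      rw [hDval j hj]
      split <;> simp
    have h2 : ∑ S ∈ F, (if D.imset S = 1 then (1 : ℝ) else -1) * D.imset S = N := by
      rw [hN]
      exact Finset.sum_congr rfl fun S _ => hsgn S
    rw [h1, h2, hMeven]
  have hφE : φ E.imset = M := by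
    rw [hφ]
    have h1 : ∑ j ∈ Finset.Icc 1 n, wt j * E.imset (T j)
        = ∑ j ∈ (Finset.Icc 1 n).filter (fun j => Odd j), wt j := by
      rw [Finset.sum_filter]
      refine Finset.sum_congr rfl fun j hj => ?_
      rw [hEval j hj]
      split <;> simp
    have h2 : ∑ S ∈ F, (if D.imset S = 1 then (1 : ℝ) else -1) * E.imset S = N := by
      rw [hN]
      refine Finset.sum_congr rfl fun S hS => ?_
      have hSoff : D.imset S = E.imset S := by
        apply hoff
        simpa [hF] using hS
      rw [← hSoff, hsgn S]
    rw [h1, h2, hModd]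
  have hmax : ∀ (A : DAG (Fin p)), A.skeleton = G →
      φ A.imset ≤ M ∧ (φ A.imset = M → A.imset = D.imset ∨ A.imset = E.imset) := by
    intro A hA
    set J : Finset ℕ := (Finset.Icc 1 n).filter (fun j => A.imset (T j) = 1) with hJ
    have hJsub : J ⊆ Finset.Icc 1 n := Finset.filter_subset _ _
    have hJind : ∀ j ∈ J, j + 1 ∉ J := by
      intro j hj hj1
      rw [hJ, Finset.mem_filter] at hj hj1
      have h1 := hcollider A hA j hj.1 hj.2
      have h2 := hcollider A hA (j + 1) hj1.1 hj1.2
      have hsimp : j + 1 - 1 = j := by omega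
      rw [hsimp] at h2
      exact A.acyclic (π j) ((Relation.TransGen.single h2.1).tail h1.2)
    have hb := hbound J hJsub hJind
    have hpart1 : ∑ j ∈ Finset.Icc 1 n, wt j * A.imset (T j) = ∑ j ∈ J, wt j := by
      rw [hJ, Finset.sum_filter]
      refine Finset.sum_congr rfl fun j hj => ?_
      rcases imset01 A (T j) with h | h <;> simp [h]
    have hpart2le : ∀ S ∈ F, (if D.imset S = 1 then (1 : ℝ) else -1) * A.imset S ≤ D.imset S := by
      intro S _
      rcases imset01 D S with h | h <;> rcases imset01 A S with h' | h' <;> simp [h, h']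
    have hp2le : ∑ S ∈ F, (if D.imset S = 1 then (1 : ℝ) else -1) * A.imset S ≤ N :=
      hN ▸ Finset.sum_le_sum hpart2le
    constructor
    · rw [hφ, hpart1]
      have := hb.1
      rw [hM]
      linarith
    · intro heq
      rw [hφ, hpart1] at heq
      have hp1 : ∑ j ∈ J, wt j = M₀ := by
        have := hb.1
        rw [hM] at heq
        linarith
      have hp2 : ∑ S ∈ F, (if D.imset S = 1 then (1 : ℝ) else -1) * A.imset S = N := by
        rw [hM] at heq
        linarith
      have hSe := (Finset.sum_eq_sum_iff_of_le hpart2le).1 (by rw [hp2, hN])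
      have hAoff : ∀ S ∈ F, A.imset S = D.imset S := by
        intro S hS
        have h := hSe S hS
        rcases imset01 D S with h0 | h0 <;> rcases imset01 A S with h1 | h1 <;>
          rw [h0, h1] at h ⊢ <;> norm_num at h
      have hAval : ∀ S : Finset (Fin p), (∀ j ∈ Finset.Icc 1 n, S ≠ T j) → A.imset S = D.imset S := by
        intro S hS
        refine hAoff S ?_
        simp only [hF, Finset.mem_filter, Finset.mem_univ, true_and]
        exact hS
      rcases hb.2 hp1 with hodd | heven
      · right
        funext S
        by_cases hS : ∀ j ∈ Finset.Icc 1 n, S ≠ T j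
        · rw [hAval S hS, hoff S hS]
        · push_neg at hS
          obtain ⟨j, hj, rfl⟩ := hS
          rw [hEval j hj]
          by_cases hoj : Odd j
          · have : j ∈ J := (hodd j hj).2 hoj
            rw [hJ, Finset.mem_filter] at this
            rw [this.2]
            simp [hoj]
          · have : j ∉ J := fun hc => hoj ((hodd j hj).1 hc)
            rw [hJ, Finset.mem_filter] at this
            have h0 : A.imset (T j) ≠ 1 := fun hc => this ⟨hj, hc⟩
            rcases imset01 A (T j) with h1 | h1
            · rw [h1]; simp [hoj]
            · exact absurd h1 h0
      · left
        funext S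
        by_cases hS : ∀ j ∈ Finset.Icc 1 n, S ≠ T j
        · exact hAval S hS
        · push_neg at hS
          obtain ⟨j, hj, rfl⟩ := hS
          rw [hDval j hj]
          by_cases hoj : Even j
          · have : j ∈ J := (heven j hj).2 hoj
            rw [hJ, Finset.mem_filter] at this
            rw [this.2]
            simp [hoj]
          · have : j ∉ J := fun hc => hoj ((heven j hj).1 hc)
            rw [hJ, Finset.mem_filter] at this
            have h0 : A.imset (T j) ≠ 1 := fun hc => this ⟨hj, hc⟩
            rcases imset01 A (T j) with h1 | h1
            · rw [h1]; simp [hoj]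
            · exact absurd h1 h0
  -- D.imset ≠ E.imset
  have h1I : (1 : ℕ) ∈ Finset.Icc 1 n := by
    rw [Finset.mem_Icc]; omega
  have hneq : D.imset ≠ E.imset := by
    intro h
    have h1 := hDval 1 h1I
    have h2 := hEval 1 h1I
    rw [h] at h1
    rw [h1] at h2
    norm_num at h2
  -- convex geometry
  have hsegφ : ∀ x ∈ segment ℝ D.imset E.imset, φ x = M := by
    rintro x ⟨a, b, ha, hb, hab, rfl⟩
    rw [map_add, map_smul, map_smul, hφD, hφE, smul_eq_mul, smul_eq_mul,
      ← add_mul, hab, one_mul]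
  set K : Set (Finset (Fin p) → ℝ) := segment ℝ D.imset E.imset ∪ {x | φ x < M} with hK
  have hKconv : Convex ℝ K := by
    intro x hx y hy a b ha hb hab
    rcases hx with hx | hx <;> rcases hy with hy | hy
    · exact Or.inl ((convex_segment _ _) hx hy ha hb hab)
    · rcases eq_or_lt_of_le hb with hb0 | hb0
      · left
        have : a = 1 := by linarith
        simp [this, ← hb0]
        exact hx
      · right
        have hφx := hsegφ x hx
        have : φ (a • x + b • y) = a * φ x + b * φ y := by
          rw [map_add, map_smul, map_smul, smul_eq_mul, smul_eq_mul]
        rw [Set.mem_setOf_eq, this, hφx]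
        have hy' : φ y < M := hy
        have hsum : a * M + b * M = M := by rw [← add_mul, hab, one_mul]
        nlinarith [mul_lt_mul_of_pos_left hy' hb0]
    · rcases eq_or_lt_of_le ha with ha0 | ha0
      · left
        have : b = 1 := by linarith
        simp [this, ← ha0]
        exact hy
      · right
        have hφy := hsegφ y hy
        have : φ (a • x + b • y) = a * φ x + b * φ y := by
          rw [map_add, map_smul, map_smul, smul_eq_mul, smul_eq_mul]
        rw [Set.mem_setOf_eq, this, hφy]
        have hx' : φ x < M := hx
        have hsum : a * M + b * M = M := by rw [← add_mul, hab, one_mul]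
        nlinarith [mul_lt_mul_of_pos_left hx' ha0]
    · right
      have : φ (a • x + b • y) = a * φ x + b * φ y := by
        rw [map_add, map_smul, map_smul, smul_eq_mul, smul_eq_mul]
      rw [Set.mem_setOf_eq, this]
      rcases eq_or_lt_of_le ha with ha0 | ha0
      · have hb1 : b = 1 := by linarith
        rw [← ha0, hb1]
        simpa using hy
      · have hx' : φ x < M := hx
        have hy' : φ y < M := hy
        have hsum : a * M + b * M = M := by rw [← add_mul, hab, one_mul]
        nlinarith [mul_lt_mul_of_pos_left hx' ha0, mul_le_mul_of_nonneg_left hy'.le hb]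
  have hVK : {f : Finset (Fin p) → ℝ | ∃ A : DAG (Fin p), A.skeleton = G ∧ f = A.imset} ⊆ K := by
    rintro f ⟨A, hA, rfl⟩
    rcases eq_or_lt_of_le (hmax A hA).1 with h | h
    · rcases (hmax A hA).2 h with h' | h'
      · rw [h']; exact Or.inl (left_mem_segment ℝ _ _)
      · rw [h']; exact Or.inl (right_mem_segment ℝ _ _)
    · exact Or.inr h
  have hCIMK : CIM G ⊆ K := convexHull_min hVK hKconv
  have hCIMle : ∀ x ∈ CIM G, φ x ≤ M := by
    intro x hx
    refine convexHull_min ?_ (convex_halfSpace_le (LinearMap.isLinear φ) M) hx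
    rintro f ⟨A, hA, rfl⟩
    exact (hmax A hA).1
  have hDCIM : D.imset ∈ CIM G := subset_convexHull ℝ _ ⟨D, hD, rfl⟩
  have hECIM : E.imset ∈ CIM G := subset_convexHull ℝ _ ⟨E, hE, rfl⟩
  have hiff : ∀ x ∈ CIM G, φ x = M ↔ x ∈ segment ℝ D.imset E.imset := by
    intro x hx
    constructor
    · intro hxe
      rcases hCIMK hx with h | h
      · exact h
      · exfalso
        rw [Set.mem_setOf_eq, hxe] at h
        exact lt_irrefl _ h
    · exact hsegφ x
  constructor
  · exact ⟨hneq, φ, by rw [hφD]; exact hCIMle, by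
      intro x hx
      rw [hφD]
      exact hiff x hx⟩
  · refine ⟨hneq.symm, φ, by rw [hφE]; exact hCIMle, ?_⟩
    intro x hx
    rw [hφE, segment_symm]
    exact hiff x hx


lemma eVec_apply {p : ℕ} (A S : Finset (Fin p)) : eVec A S = if S = A then 1 else 0 := by
  by_cases h : S = A <;> simp [eVec, h]

lemma T_inj {p : ℕ} (n : ℕ) (π : ℕ → Fin p)
    (hinj' : ∀ a b : ℕ, a ≤ n+1 → b ≤ n+1 → π a = π b → a = b) :
    ∀ j ∈ Finset.Icc 1 n, ∀ j' ∈ Finset.Icc 1 n,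
      ({π (j-1), π j, π (j+1)} : Finset (Fin p)) = {π (j'-1), π j', π (j'+1)} → j = j' := by
  intro j hj j' hj' hT
  rw [Finset.mem_Icc] at hj hj'
  have h1 : π (j-1) ∈ ({π (j'-1), π j', π (j'+1)} : Finset (Fin p)) := by
    rw [← hT]; simp
  have h2 : π (j'-1) ∈ ({π (j-1), π j, π (j+1)} : Finset (Fin p)) := by
    rw [hT]; simp
  simp only [Finset.mem_insert, Finset.mem_singleton] at h1 h2
  have hd1 : j - 1 = j'-1 ∨ j-1 = j' ∨ j-1 = j'+1 := by
    rcases h1 with h|h|h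
    · exact Or.inl (hinj' _ _ (by omega) (by omega) h)
    · exact Or.inr (Or.inl (hinj' _ _ (by omega) (by omega) h))
    · exact Or.inr (Or.inr (hinj' _ _ (by omega) (by omega) h))
  have hd2 : j' - 1 = j-1 ∨ j'-1 = j ∨ j'-1 = j+1 := by
    rcases h2 with h|h|h
    · exact Or.inl (hinj' _ _ (by omega) (by omega) h)
    · exact Or.inr (Or.inl (hinj' _ _ (by omega) (by omega) h))
    · exact Or.inr (Or.inr (hinj' _ _ (by omega) (by omega) h))
  omega


noncomputable def shiftwt (m : ℕ) : ℕ → ℝ := fun j => if j = 1 ∨ j = 2*m then 1 else 2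

lemma odd_Icc_eq (N : ℕ) : (Finset.Icc 1 N).filter (fun j => Odd j)
    = (Finset.range ((N+1)/2)).image (fun t => 2*t+1) := by
  ext j
  simp only [Finset.mem_filter, Finset.mem_Icc, Finset.mem_image, Finset.mem_range, Nat.odd_iff]
  constructor
  · rintro ⟨⟨h1, h2⟩, h3⟩
    exact ⟨(j-1)/2, by omega, by omega⟩
  · rintro ⟨t, ht, rfl⟩
    omega

lemma even_Icc_eq (N : ℕ) : (Finset.Icc 1 N).filter (fun j => Even j)
    = (Finset.range (N/2)).image (fun t => 2*t+2) := by
  ext j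
  simp only [Finset.mem_filter, Finset.mem_Icc, Finset.mem_image, Finset.mem_range, Nat.even_iff]
  constructor
  · rintro ⟨⟨h1, h2⟩, h3⟩
    exact ⟨(j-2)/2, by omega, by omega⟩
  · rintro ⟨t, ht, rfl⟩
    omega

lemma card_odd_Icc (N : ℕ) : ((Finset.Icc 1 N).filter (fun j => Odd j)).card = (N+1)/2 := by
  rw [odd_Icc_eq, Finset.card_image_of_injective _ (fun a b h => by omega), Finset.card_range]

lemma card_even_Icc (N : ℕ) : ((Finset.Icc 1 N).filter (fun j => Even j)).card = N/2 := by
  rw [even_Icc_eq, Finset.card_image_of_injective _ (fun a b h => by omega), Finset.card_range]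

lemma sum_ite_two (m a : ℕ) (ha : a < m) :
    ∑ t ∈ Finset.range m, (if t = a then (1:ℝ) else 2) = 2*m - 1 := by
  have h : ∀ t, (if t = a then (1:ℝ) else 2) = 2 - (if t = a then 1 else 0) := by
    intro t; split <;> norm_num
  simp_rw [h]
  rw [Finset.sum_sub_distrib, Finset.sum_const, Finset.sum_ite_eq' (Finset.range m) a (fun _ => (1:ℝ)),
    Finset.card_range]
  simp [Finset.mem_range.2 ha, nsmul_eq_mul]
  ring

lemma shift_sum_odd (m : ℕ) (hm : 1 ≤ m) :
    ∑ j ∈ (Finset.Icc 1 (2*m)).filter (fun j => Odd j), shiftwt m j = 2*(m:ℝ) - 1 := by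
  rw [odd_Icc_eq, Finset.sum_image (fun a _ b _ h => by omega)]
  have h2 : (2*m+1)/2 = m := by omega
  rw [h2]
  have h3 : ∀ t ∈ Finset.range m, shiftwt m (2*t+1) = if t = 0 then (1:ℝ) else 2 := by
    intro t ht
    unfold shiftwt
    by_cases h : t = 0
    · simp [h]
    · have : ¬(2*t+1 = 1 ∨ 2*t+1 = 2*m) := by omega
      simp only [this, if_false]
      simp [h]
  rw [Finset.sum_congr rfl h3]
  exact sum_ite_two m 0 (by omega)

lemma shift_sum_even (m : ℕ) (hm : 1 ≤ m) :
    ∑ j ∈ (Finset.Icc 1 (2*m)).filter (fun j => Even j), shiftwt m j = 2*(m:ℝ) - 1 := by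
  rw [even_Icc_eq, Finset.sum_image (fun a _ b _ h => by omega)]
  have h2 : (2*m)/2 = m := by omega
  rw [h2]
  have h3 : ∀ t ∈ Finset.range m, shiftwt m (2*t+2) = if t = m-1 then (1:ℝ) else 2 := by
    intro t ht
    rw [Finset.mem_range] at ht
    unfold shiftwt
    by_cases h : t = m-1
    · have h4 : 2*t+2 = 1 ∨ 2*t+2 = 2*m := by omega
      simp only [h4, if_true]
      simp [h]
    · have h4 : ¬(2*t+2 = 1 ∨ 2*t+2 = 2*m) := by omega
      simp only [h4, if_false]
      simp [h]
  rw [Finset.sum_congr rfl h3]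
  exact sum_ite_two m (m-1) (by omega)

lemma shift_bound (m : ℕ) (hm : 1 ≤ m) :
    ∀ J ⊆ Finset.Icc 1 (2*m), (∀ j ∈ J, j + 1 ∉ J) →
      (∑ j ∈ J, shiftwt m j ≤ 2*(m:ℝ) - 1 ∧ (∑ j ∈ J, shiftwt m j = 2*(m:ℝ) - 1 →
        (∀ j ∈ Finset.Icc 1 (2*m), j ∈ J ↔ Odd j) ∨
        (∀ j ∈ Finset.Icc 1 (2*m), j ∈ J ↔ Even j))) := by
  intro J hJsub hind
  have hmemIcc : ∀ j ∈ J, 1 ≤ j ∧ j ≤ 2*m := by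
    intro j hj
    have := hJsub hj
    rwa [Finset.mem_Icc] at this
  have hinjOn : Set.InjOn (fun j => (j+1)/2) (J : Set ℕ) := by
    intro a ha b hb h
    simp only [Finset.mem_coe] at ha hb
    by_contra hne
    simp only at h
    have : a + 1 = b ∨ b + 1 = a := by omega
    rcases this with h' | h'
    · exact hind a ha (by rwa [h'])
    · exact hind b hb (by rwa [h'])
  have hcard : J.card ≤ m := by
    have hmap : ∀ j ∈ J, (j+1)/2 ∈ Finset.Icc 1 m := by
      intro j hj
      have := hmemIcc j hj
      rw [Finset.mem_Icc]
      omega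
    have h := Finset.card_le_card_of_injOn (t := Finset.Icc 1 m) (fun j => (j+1)/2) hmap hinjOn
    simpa using h
  have himage : J.card = m → ∀ k, 1 ≤ k → k ≤ m → ∃ j ∈ J, (j+1)/2 = k := by
    intro hc k h1 h2
    have him : J.image (fun j => (j+1)/2) = Finset.Icc 1 m := by
      apply Finset.eq_of_subset_of_card_le
      · intro x hx
        rw [Finset.mem_image] at hx
        obtain ⟨j, hj, rfl⟩ := hx
        have := hmemIcc j hj
        rw [Finset.mem_Icc]
        omega
      · rw [Finset.card_image_of_injOn hinjOn, hc, Nat.card_Icc]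
        omega
    have : k ∈ J.image (fun j => (j+1)/2) := by
      rw [him, Finset.mem_Icc]; exact ⟨h1, h2⟩
    simpa [Finset.mem_image] using this
  have hchain : J.card = m → ∀ k, 1 ≤ k → 2*k ∈ J → ∀ k', k ≤ k' → k' ≤ m → 2*k' ∈ J := by
    intro hc k h1 hk k' hk1 hk2
    induction k', hk1 using Nat.le_induction with
    | base => exact hk
    | succ k' hkk ih =>
      have h2k' : 2*k' ∈ J := ih (by omega)
      obtain ⟨j, hj, hjf⟩ := himage hc (k'+1) (by omega) (by omega)
      have hj2 : j = 2*k'+1 ∨ j = 2*k'+2 := by omega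
      rcases hj2 with rfl | rfl
      · exact absurd hj (hind (2*k') h2k')
      · rwa [show 2*(k'+1) = 2*k'+2 by omega]
  have hends : J.card = m → (1 ∈ J ∨ 2*m ∈ J) := by
    intro hc
    by_contra h
    push_neg at h
    obtain ⟨j, hj, hjf⟩ := himage hc 1 le_rfl hm
    have hj2 : j = 1 ∨ j = 2 := by
      have := hmemIcc j hj
      omega
    rcases hj2 with rfl | rfl
    · exact h.1 hj
    · exact h.2 (hchain hc 1 le_rfl (by simpa using hj) m hm le_rfl)
  have hsum : ∑ j ∈ J, shiftwt m j
      = 2*(J.card:ℝ) - (if 1 ∈ J then 1 else 0) - (if 2*m ∈ J then 1 else 0) := by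
    have hper : ∀ j ∈ J, shiftwt m j
        = 2 - (if j = 1 then (1:ℝ) else 0) - (if j = 2*m then 1 else 0) := by
      intro j hj
      have hj' := hmemIcc j hj
      unfold shiftwt
      by_cases h1 : j = 1 <;> by_cases h2 : j = 2*m
      · omega
      · have h3 : ¬((1:ℕ) = 2*m) := by omega
        simp [h1, h2, h3]
        norm_num
      · have h3 : ¬((2*m:ℕ) = 1) := by omega
        simp [h1, h2, h3]
        norm_num
      · have h3 : ¬(j = 1 ∨ j = 2*m) := by omega
        simp only [h3, if_false]
        simp [h1, h2]
    rw [Finset.sum_congr rfl hper, Finset.sum_sub_distrib, Finset.sum_sub_distrib,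
      Finset.sum_const, Finset.sum_ite_eq' J 1 (fun _ => (1:ℝ)),
      Finset.sum_ite_eq' J (2*m) (fun _ => (1:ℝ)), nsmul_eq_mul]
    ring_nf
  have hi1 : (0:ℝ) ≤ (if 1 ∈ J then (1:ℝ) else 0) ∧ (if 1 ∈ J then (1:ℝ) else 0) ≤ 1 := by
    split <;> norm_num
  have hi2 : (0:ℝ) ≤ (if 2*m ∈ J then (1:ℝ) else 0) ∧ (if 2*m ∈ J then (1:ℝ) else 0) ≤ 1 := by
    split <;> norm_num
  constructor
  · rw [hsum]
    by_cases hc : J.card = m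
    · have hend := hends hc
      have hι : (1:ℝ) ≤ (if 1 ∈ J then (1:ℝ) else 0) + (if 2*m ∈ J then 1 else 0) := by
        rcases hend with h | h <;> split_ifs <;> first | norm_num | exact absurd ‹_› (by assumption)
      rw [hc]
      linarith
    · have hclt : J.card ≤ m - 1 := by omega
      have h' : (J.card : ℝ) ≤ ((m - 1 : ℕ) : ℝ) := Nat.cast_le.2 hclt
      rw [Nat.cast_sub hm] at h'
      push_cast at h'
      linarith [hi1.1, hi2.1]
  · intro heq
    rw [hsum] at heq
    have hc : J.card = m := by
      by_contra hc
      have hclt : J.card ≤ m - 1 := by omega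
      have h' : (J.card : ℝ) ≤ ((m - 1 : ℕ) : ℝ) := Nat.cast_le.2 hclt
      rw [Nat.cast_sub hm] at h'
      push_cast at h'
      have := hi1.1
      have := hi2.1
      linarith
    rw [hc] at heq
    have hi : (if 1 ∈ J then (1:ℝ) else 0) + (if 2*m ∈ J then 1 else 0) = 1 := by linarith
    by_cases h1J : 1 ∈ J
    · -- all odd
      have h2m : 2*m ∉ J := by
        intro h
        simp only [h1J, h, if_true] at hi
        norm_num at hi
      left
      have hnoev : ∀ j ∈ J, Odd j := by
        intro j hj
        rcases Nat.even_or_odd j with hev | hod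
        · exfalso
          obtain ⟨k, hk⟩ := hev
          have hjIcc := hmemIcc j hj
          have h2k : 2*k ∈ J := by rwa [show 2*k = j by omega]
          exact h2m (hchain hc k (by omega) h2k m (by omega) le_rfl)
        · exact hod
      have hsub2 : J ⊆ (Finset.Icc 1 (2*m)).filter (fun j => Odd j) :=
        fun j hj => Finset.mem_filter.2 ⟨hJsub hj, hnoev j hj⟩
      have hcards : ((Finset.Icc 1 (2*m)).filter (fun j => Odd j)).card = m := by
        rw [card_odd_Icc]; omega
      have hJeq := Finset.eq_of_subset_of_card_le hsub2 (by rw [hcards, hc])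
      intro j hjI
      rw [hJeq, Finset.mem_filter]
      simp [hjI]
    · -- all even
      right
      obtain ⟨j, hj, hjf⟩ := himage hc 1 le_rfl hm
      have h2J : 2 ∈ J := by
        have := hmemIcc j hj
        have hj2 : j = 1 ∨ j = 2 := by omega
        rcases hj2 with rfl | rfl
        · exact absurd hj h1J
        · exact hj
      have hallev : ∀ k, 1 ≤ k → k ≤ m → 2*k ∈ J :=
        fun k h1 h2 => hchain hc 1 le_rfl (by simpa using h2J) k h1 h2
      have hnood : ∀ j ∈ J, Even j := by
        intro j hj
        rcases Nat.even_or_odd j with h | h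
        · exact h
        · exfalso
          obtain ⟨a, ha⟩ := h
          have hjIcc := hmemIcc j hj
          by_cases ha0 : a = 0
          · exact h1J (by rwa [show j = 1 by omega] at hj)
          · have h2a : 2*a ∈ J := hallev a (by omega) (by omega)
            exact hind (2*a) h2a (by rwa [show 2*a+1 = j by omega])
      have hsub2 : J ⊆ (Finset.Icc 1 (2*m)).filter (fun j => Even j) :=
        fun j hj => Finset.mem_filter.2 ⟨hJsub hj, hnood j hj⟩
      have hcards : ((Finset.Icc 1 (2*m)).filter (fun j => Even j)).card = m := by
        rw [card_even_Icc]; omega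
      have hJeq := Finset.eq_of_subset_of_card_le hsub2 (by rw [hcards, hc])
      intro j hjI
      rw [hJeq, Finset.mem_filter]
      simp [hjI]

noncomputable def splitwt (m : ℕ) : ℕ → ℝ := fun j => if Even j then (m:ℝ) else (m:ℝ) - 1

lemma split_sum_odd (m : ℕ) (hm : 1 ≤ m) :
    ∑ j ∈ (Finset.Icc 1 (2*m-1)).filter (fun j => Odd j), splitwt m j = (m:ℝ)*((m:ℝ)-1) := by
  rw [odd_Icc_eq, Finset.sum_image (fun a _ b _ h => by omega)]
  have h2 : (2*m-1+1)/2 = m := by omega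
  rw [h2]
  have h3 : ∀ t ∈ Finset.range m, splitwt m (2*t+1) = (m:ℝ)-1 := by
    intro t _
    unfold splitwt
    have : ¬ Even (2*t+1) := by simp [Nat.even_iff]
    simp [this]
  rw [Finset.sum_congr rfl h3, Finset.sum_const, Finset.card_range, nsmul_eq_mul]

lemma split_sum_even (m : ℕ) (hm : 1 ≤ m) :
    ∑ j ∈ (Finset.Icc 1 (2*m-1)).filter (fun j => Even j), splitwt m j = (m:ℝ)*((m:ℝ)-1) := by
  rw [even_Icc_eq, Finset.sum_image (fun a _ b _ h => by omega)]
  have h2 : (2*m-1)/2 = m-1 := by omega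
  rw [h2]
  have h3 : ∀ t ∈ Finset.range (m-1), splitwt m (2*t+2) = (m:ℝ) := by
    intro t _
    unfold splitwt
    have : Even (2*t+2) := by simp [Nat.even_iff]
    simp [this]
  rw [Finset.sum_congr rfl h3, Finset.sum_const, Finset.card_range, nsmul_eq_mul]
  have : ((m-1:ℕ):ℝ) = (m:ℝ) - 1 := by
    rw [Nat.cast_sub hm]; norm_num
  rw [this]; ring

lemma split_bound (m : ℕ) (hm : 1 ≤ m) :
    ∀ J ⊆ Finset.Icc 1 (2*m-1), (∀ j ∈ J, j + 1 ∉ J) →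
      (∑ j ∈ J, splitwt m j ≤ (m:ℝ)*((m:ℝ)-1) ∧ (∑ j ∈ J, splitwt m j = (m:ℝ)*((m:ℝ)-1) →
        (∀ j ∈ Finset.Icc 1 (2*m-1), j ∈ J ↔ Odd j) ∨
        (∀ j ∈ Finset.Icc 1 (2*m-1), j ∈ J ↔ Even j))) := by
  classical
  intro J hJsub hind
  have hmemIcc : ∀ j ∈ J, 1 ≤ j ∧ j ≤ 2*m-1 := by
    intro j hj
    have := hJsub hj
    rwa [Finset.mem_Icc] at this
  by_cases hm1 : m = 1
  · -- degenerate case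
    subst hm1
    have hJval : ∀ j ∈ J, splitwt 1 j = 0 := by
      intro j hj
      have := hmemIcc j hj
      have hj1 : j = 1 := by omega
      subst hj1
      unfold splitwt
      have : ¬ Even 1 := by simp
      simp [this]
    have hs0 : ∑ j ∈ J, splitwt 1 j = 0 := Finset.sum_eq_zero hJval
    rw [hs0]
    constructor
    · norm_num
    intro _
    by_cases h1J : 1 ∈ J
    · left
      intro j hjI
      rw [Finset.mem_Icc] at hjI
      have : j = 1 := by omega
      subst this
      simp [h1J]
    · right
      intro j hjI
      rw [Finset.mem_Icc] at hjI
      have : j = 1 := by omega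
      subst this
      simp [h1J, Nat.even_iff]
  · have hm2 : 2 ≤ m := by omega
    have hinjOn : Set.InjOn (fun j => (j+1)/2) (J : Set ℕ) := by
      intro a ha b hb h
      simp only [Finset.mem_coe] at ha hb
      by_contra hne
      simp only at h
      have : a + 1 = b ∨ b + 1 = a := by omega
      rcases this with h' | h'
      · exact hind a ha (by rwa [h'])
      · exact hind b hb (by rwa [h'])
    have hcard : J.card ≤ m := by
      have hmap : ∀ j ∈ J, (j+1)/2 ∈ Finset.Icc 1 m := by
        intro j hj
        have := hmemIcc j hj
        rw [Finset.mem_Icc]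
        omega
      have h := Finset.card_le_card_of_injOn (t := Finset.Icc 1 m) (fun j => (j+1)/2) hmap hinjOn
      simpa using h
    have himage : J.card = m → ∀ k, 1 ≤ k → k ≤ m → ∃ j ∈ J, (j+1)/2 = k := by
      intro hc k h1 h2
      have him : J.image (fun j => (j+1)/2) = Finset.Icc 1 m := by
        apply Finset.eq_of_subset_of_card_le
        · intro x hx
          rw [Finset.mem_image] at hx
          obtain ⟨j, hj, rfl⟩ := hx
          have := hmemIcc j hj
          rw [Finset.mem_Icc]
          omega
        · rw [Finset.card_image_of_injOn hinjOn, hc, Nat.card_Icc]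
          omega
      have : k ∈ J.image (fun j => (j+1)/2) := by
        rw [him, Finset.mem_Icc]; exact ⟨h1, h2⟩
      simpa [Finset.mem_image] using this
    have hchain : J.card = m → ∀ k, 1 ≤ k → 2*k ∈ J → ∀ k', k ≤ k' → k' ≤ m-1 → 2*k' ∈ J := by
      intro hc k h1 hk k' hk1 hk2
      induction k', hk1 using Nat.le_induction with
      | base => exact hk
      | succ k' hkk ih =>
        have h2k' : 2*k' ∈ J := ih (by omega)
        obtain ⟨j, hj, hjf⟩ := himage hc (k'+1) (by omega) (by omega)
        have hj2 : j = 2*k'+1 ∨ j = 2*k'+2 := by omega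
        rcases hj2 with rfl | rfl
        · exact absurd hj (hind (2*k') h2k')
        · rwa [show 2*(k'+1) = 2*k'+2 by omega]
    have hkey : 1 ≤ (J.filter (fun j => Even j)).card → J.card ≤ m - 1 := by
      intro he1
      by_contra hgt
      have hc : J.card = m := by omega
      obtain ⟨j, hj⟩ := Finset.card_pos.1 (by omega : 0 < (J.filter (fun j => Even j)).card)
      rw [Finset.mem_filter] at hj
      obtain ⟨hjJ, hjev⟩ := hj
      obtain ⟨k, hk⟩ := hjev
      have hjIcc := hmemIcc j hjJ
      have h2k : 2*k ∈ J := by rwa [show 2*k = j by omega]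
      have htop : 2*(m-1) ∈ J := hchain hc k (by omega) h2k (m-1) (by omega) le_rfl
      obtain ⟨j', hj', hjf'⟩ := himage hc m (by omega) le_rfl
      have hj'Icc := hmemIcc j' hj'
      have : j' = 2*m-1 := by omega
      subst this
      exact hind (2*(m-1)) htop (by rwa [show 2*(m-1)+1 = 2*m-1 by omega])
    -- sum decomposition
    set o := (J.filter (fun j => Odd j)).card with ho
    set e := (J.filter (fun j => Even j)).card with he
    have hoe : o + e = J.card := by
      have h := Finset.card_filter_add_card_filter_not (s := J) (p := fun j => Odd j)
      simp only [Nat.not_odd_iff_even] at h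
      rw [ho, he]
      exact h
    have hsum : ∑ j ∈ J, splitwt m j = (e:ℝ)*(m:ℝ) + (o:ℝ)*((m:ℝ)-1) := by
      unfold splitwt
      rw [Finset.sum_ite]
      simp only [Finset.sum_const, nsmul_eq_mul]
      have hfe : J.filter (fun j => ¬ Even j) = J.filter (fun j => Odd j) := by
        apply Finset.filter_congr
        intro j _
        simp [Nat.not_even_iff_odd]
      rw [hfe]
    have he_le : e ≤ m - 1 := by
      have hmap : ∀ j ∈ J.filter (fun j => Even j), (j+1)/2 ∈ Finset.Icc 1 (m-1) := by
        intro j hj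
        rw [Finset.mem_filter] at hj
        have h1 := hmemIcc j hj.1
        have h2 := hj.2
        rw [Nat.even_iff] at h2
        rw [Finset.mem_Icc]
        omega
      have h := Finset.card_le_card_of_injOn (t := Finset.Icc 1 (m-1)) (fun j => (j+1)/2) hmap
        (hinjOn.mono (by intro x hx; simp only [Finset.coe_filter, Set.mem_setOf_eq] at hx
                         exact hx.1))
      simpa using h
    have hcast_e : ((e:ℝ)) ≤ (m:ℝ) - 1 := by
      have : ((e:ℕ):ℝ) ≤ ((m-1:ℕ):ℝ) := Nat.cast_le.2 he_le
      rwa [Nat.cast_sub hm, Nat.cast_one] at this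
    constructor
    · rw [hsum]
      by_cases he0 : e = 0
      · have ho_le : (o:ℝ) ≤ (m:ℝ) := by
          have hole : o ≤ m := by omega
          exact_mod_cast hole
        rw [he0]
        push_cast
        have hm1nn : (0:ℝ) ≤ (m:ℝ) - 1 := by
          have : (1:ℝ) ≤ (m:ℝ) := by exact_mod_cast hm
          linarith
        nlinarith
      · have hoem : o + e ≤ m - 1 := by
          have := hkey (by omega)
          omega
        have hcast_oe : (o:ℝ) + (e:ℝ) ≤ (m:ℝ) - 1 := by
          have : ((o+e:ℕ):ℝ) ≤ ((m-1:ℕ):ℝ) := Nat.cast_le.2 hoem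
          rw [Nat.cast_sub hm] at this
          push_cast at this
          linarith
        have hm1nn : (0:ℝ) ≤ (m:ℝ) - 1 := by
          have : (1:ℝ) ≤ (m:ℝ) := by exact_mod_cast hm
          linarith
        nlinarith
    · intro heq
      rw [hsum] at heq
      by_cases he0 : e = 0
      · left
        have ho_m : o = m := by
          rw [he0] at heq
          push_cast at heq
          have hm1pos : (0:ℝ) < (m:ℝ) - 1 := by
            have : (2:ℝ) ≤ (m:ℝ) := by exact_mod_cast hm2
            linarith
          have : (o:ℝ) = (m:ℝ) := by
            have h := mul_right_cancel₀ (ne_of_gt hm1pos) (by linarith : (o:ℝ)*((m:ℝ)-1) = (m:ℝ)*((m:ℝ)-1))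
            exact h
          exact_mod_cast this
        have hnoev : ∀ j ∈ J, Odd j := by
          intro j hj
          rcases Nat.even_or_odd j with hev | hod
          · exfalso
            have : j ∈ J.filter (fun j => Even j) := Finset.mem_filter.2 ⟨hj, hev⟩
            have := Finset.card_pos.2 ⟨j, this⟩
            omega
          · exact hod
        have hsub2 : J ⊆ (Finset.Icc 1 (2*m-1)).filter (fun j => Odd j) :=
          fun j hj => Finset.mem_filter.2 ⟨hJsub hj, hnoev j hj⟩
        have hcards : ((Finset.Icc 1 (2*m-1)).filter (fun j => Odd j)).card = m := by
          rw [card_odd_Icc]; omega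
        have hcJ : J.card = m := by omega
        have hJeq := Finset.eq_of_subset_of_card_le hsub2 (by rw [hcards, hcJ])
        intro j hjI
        rw [hJeq, Finset.mem_filter]
        simp [hjI]
      · right
        have hoem : o + e ≤ m - 1 := by
          have := hkey (by omega)
          omega
        have hcast_oe : (o:ℝ) + (e:ℝ) ≤ (m:ℝ) - 1 := by
          have : ((o+e:ℕ):ℝ) ≤ ((m-1:ℕ):ℝ) := Nat.cast_le.2 hoem
          rw [Nat.cast_sub hm] at this
          push_cast at this
          linarith
        have hm1pos : (0:ℝ) < (m:ℝ) - 1 := by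
          have : (2:ℝ) ≤ (m:ℝ) := by exact_mod_cast hm2
          linarith
        -- e = m-1 and o = 0
        have hee : (e:ℝ) = (m:ℝ) - 1 := by nlinarith
        have hoo : (o:ℝ) = 0 := by nlinarith
        have ho0 : o = 0 := by exact_mod_cast hoo
        have hem : e = m - 1 := by
          have : ((e:ℕ):ℝ) = ((m-1:ℕ):ℝ) := by
            rw [Nat.cast_sub hm]
            push_cast
            linarith
          exact_mod_cast this
        have hnood : ∀ j ∈ J, Even j := by
          intro j hj
          rcases Nat.even_or_odd j with h | h
          · exact h
          · exfalso
            have : j ∈ J.filter (fun j => Odd j) := Finset.mem_filter.2 ⟨hj, h⟩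
            have := Finset.card_pos.2 ⟨j, this⟩
            omega
        have hsub2 : J ⊆ (Finset.Icc 1 (2*m-1)).filter (fun j => Even j) :=
          fun j hj => Finset.mem_filter.2 ⟨hJsub hj, hnood j hj⟩
        have hcards : ((Finset.Icc 1 (2*m-1)).filter (fun j => Even j)).card = m - 1 := by
          rw [card_even_Icc]; omega
        have hcJ : J.card = m - 1 := by omega
        have hJeq := Finset.eq_of_subset_of_card_le hsub2 (by rw [hcards, hcJ])
        intro j hjI
        rw [hJeq, Finset.mem_filter]
        simp [hjI]


section Derive

variable {p : ℕ}

lemma shift_edge (G : SimpleGraph (Fin p)) (htree : G.IsTree)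
    (D E : DAG (Fin p)) (hD : D.skeleton = G) (hE : E.skeleton = G)
    (h : IsShift D E) :
    IsPolytopeEdge (CIM G) D.imset E.imset ∧ IsPolytopeEdge (CIM G) E.imset D.imset := by
  obtain ⟨m, hm, π, hinj, hadjD, heq⟩ := h
  have hinst : (fun (a b : Fin p) => Classical.propDecidable (a = b)) = instDecidableEqFin p := by
    funext a b
    exact Subsingleton.elim _ _
  rw [hinst] at heq
  have hinj' : ∀ a b : ℕ, a ≤ 2*m+1 → b ≤ 2*m+1 → π a = π b → a = b := by
    intro a b ha hb hab
    exact hinj (Set.mem_Iic.2 ha) (Set.mem_Iic.2 hb) hab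
  have hadj : ∀ k < 2*m + 1, G.Adj (π k) (π (k+1)) := by
    intro k hk
    have := hadjD k hk
    rwa [hD] at this
  have htinj := T_inj (2*m) π hinj'
  have hval : ∀ S : Finset (Fin p),
      E.imset S - (∑ t ∈ Finset.range m,
          if S = ({π (2*t), π (2*t+1), π (2*t+2)} : Finset (Fin p)) then (1:ℝ) else 0)
        = D.imset S - (∑ t ∈ Finset.range m,
          if S = ({π (2*t+1), π (2*t+2), π (2*t+3)} : Finset (Fin p)) then (1:ℝ) else 0) := by
    intro S
    have h := congrFun heq S
    simp only [Pi.sub_apply, Finset.sum_apply, eVec_apply] at h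
    exact h
  have hTodd : ∀ t : ℕ, ({π (2*t), π (2*t+1), π (2*t+2)} : Finset (Fin p))
      = {π ((2*t+1)-1), π (2*t+1), π ((2*t+1)+1)} := by
    intro t
    have e1 : (2*t+1)-1 = 2*t := by omega
    have e2 : (2*t+1)+1 = 2*t+2 := by omega
    rw [e1, e2]
  have hTeven : ∀ t : ℕ, ({π (2*t+1), π (2*t+2), π (2*t+3)} : Finset (Fin p))
      = {π ((2*t+2)-1), π (2*t+2), π ((2*t+2)+1)} := by
    intro t
    have e1 : (2*t+2)-1 = 2*t+1 := by omega
    have e2 : (2*t+2)+1 = 2*t+3 := by omega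
    rw [e1, e2]
  have hsumO : ∀ j ∈ Finset.Icc 1 (2*m),
      (∑ t ∈ Finset.range m,
          if ({π (j-1), π j, π (j+1)} : Finset (Fin p)) = ({π (2*t), π (2*t+1), π (2*t+2)} : Finset (Fin p)) then (1:ℝ) else 0)
        = if Odd j then 1 else 0 := by
    intro j hj
    have hmem : ∀ t ∈ Finset.range m, (2*t+1) ∈ Finset.Icc 1 (2*m) := by
      intro t ht; rw [Finset.mem_range] at ht; rw [Finset.mem_Icc]; omega
    have hper : ∀ t ∈ Finset.range m,
        (if ({π (j-1), π j, π (j+1)} : Finset (Fin p)) = ({π (2*t), π (2*t+1), π (2*t+2)} : Finset (Fin p)) then (1:ℝ) else 0)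
          = if j = 2*t+1 then 1 else 0 := by
      intro t ht
      rw [hTodd t]
      have hiff : (({π (j-1), π j, π (j+1)} : Finset (Fin p))
          = ({π ((2*t+1)-1), π (2*t+1), π ((2*t+1)+1)} : Finset (Fin p))) ↔ j = 2*t+1 :=
        ⟨fun hh => htinj j hj (2*t+1) (hmem t ht) hh, fun hh => by rw [hh]⟩
      simp only [hiff]
    rw [Finset.sum_congr rfl hper]
    by_cases hodd : Odd j
    · have hodd2 := hodd
      obtain ⟨t₀, ht₀⟩ := hodd2
      have ht₀m : t₀ ∈ Finset.range m := by
        rw [Finset.mem_range]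
        rw [Finset.mem_Icc] at hj
        omega
      have hper2 : ∀ t ∈ Finset.range m, (if j = 2*t+1 then (1:ℝ) else 0) = if t = t₀ then 1 else 0 := by
        intro t _
        have hiff2 : (j = 2*t+1) ↔ (t = t₀) := by omega
        simp only [hiff2]
      rw [Finset.sum_congr rfl hper2, Finset.sum_ite_eq' (Finset.range m) t₀ (fun _ => (1:ℝ)),
        if_pos ht₀m, if_pos hodd]
    · have hper2 : ∀ t ∈ Finset.range m, (if j = 2*t+1 then (1:ℝ) else 0) = 0 := by
        intro t _
        have hne : ¬ (j = 2*t+1) := fun hc => hodd ⟨t, by omega⟩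
        simp [hne]
      rw [Finset.sum_congr rfl hper2, if_neg hodd]
      simp
  have hsumE : ∀ j ∈ Finset.Icc 1 (2*m),
      (∑ t ∈ Finset.range m,
          if ({π (j-1), π j, π (j+1)} : Finset (Fin p)) = ({π (2*t+1), π (2*t+2), π (2*t+3)} : Finset (Fin p)) then (1:ℝ) else 0)
        = if Even j then 1 else 0 := by
    intro j hj
    have hmem : ∀ t ∈ Finset.range m, (2*t+2) ∈ Finset.Icc 1 (2*m) := by
      intro t ht; rw [Finset.mem_range] at ht; rw [Finset.mem_Icc]; omega
    have hper : ∀ t ∈ Finset.range m,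
        (if ({π (j-1), π j, π (j+1)} : Finset (Fin p)) = ({π (2*t+1), π (2*t+2), π (2*t+3)} : Finset (Fin p)) then (1:ℝ) else 0)
          = if j = 2*t+2 then 1 else 0 := by
      intro t ht
      rw [hTeven t]
      have hiff : (({π (j-1), π j, π (j+1)} : Finset (Fin p))
          = ({π ((2*t+2)-1), π (2*t+2), π ((2*t+2)+1)} : Finset (Fin p))) ↔ j = 2*t+2 :=
        ⟨fun hh => htinj j hj (2*t+2) (hmem t ht) hh, fun hh => by rw [hh]⟩
      simp only [hiff]
    rw [Finset.sum_congr rfl hper]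
    by_cases heven : Even j
    · have heven2 := heven
      rw [Nat.even_iff] at heven2
      rw [Finset.mem_Icc] at hj
      have hper2 : ∀ t ∈ Finset.range m, (if j = 2*t+2 then (1:ℝ) else 0) = if t = j/2-1 then 1 else 0 := by
        intro t _
        have hiff2 : (j = 2*t+2) ↔ (t = j/2-1) := by omega
        simp only [hiff2]
      have ht₀m : j/2-1 ∈ Finset.range m := by
        rw [Finset.mem_range]
        omega
      rw [Finset.sum_congr rfl hper2, Finset.sum_ite_eq' (Finset.range m) (j/2-1) (fun _ => (1:ℝ)),
        if_pos ht₀m, if_pos heven]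
    · have hper2 : ∀ t ∈ Finset.range m, (if j = 2*t+2 then (1:ℝ) else 0) = 0 := by
        intro t _
        have hne : ¬ (j = 2*t+2) := fun hc => heven ⟨t+1, by omega⟩
        simp [hne]
      rw [Finset.sum_congr rfl hper2, if_neg heven]
      simp
  have hvals : ∀ j ∈ Finset.Icc 1 (2*m),
      D.imset {π (j-1), π j, π (j+1)} = (if Even j then 1 else 0) ∧
      E.imset {π (j-1), π j, π (j+1)} = (if Odd j then 1 else 0) := by
    intro j hj
    have h := hval ({π (j-1), π j, π (j+1)} : Finset (Fin p))
    rw [hsumO j hj, hsumE j hj] at h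
    rcases Nat.even_or_odd j with hpar | hpar
    · have hno : ¬ Odd j := by simp [Nat.even_iff, Nat.odd_iff] at hpar ⊢; omega
      rw [if_pos hpar, if_neg hno] at h ⊢
      rcases imset01 D {π (j-1), π j, π (j+1)} with h0|h0 <;>
        rcases imset01 E {π (j-1), π j, π (j+1)} with h1|h1 <;>
        rw [h0, h1] at h <;> first | exact ⟨h0, h1⟩ | (norm_num at h)
    · have hno : ¬ Even j := by simp [Nat.even_iff, Nat.odd_iff] at hpar ⊢; omega
      rw [if_neg hno, if_pos hpar] at h ⊢
      rcases imset01 D {π (j-1), π j, π (j+1)} with h0|h0 <;>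
        rcases imset01 E {π (j-1), π j, π (j+1)} with h1|h1 <;>
        rw [h0, h1] at h <;> first | exact ⟨h0, h1⟩ | (norm_num at h)
  have hoff : ∀ S : Finset (Fin p),
      (∀ j ∈ Finset.Icc 1 (2*m), S ≠ {π (j-1), π j, π (j+1)}) → D.imset S = E.imset S := by
    intro S hS
    have h := hval S
    have hO : (∑ t ∈ Finset.range m,
        if S = ({π (2*t), π (2*t+1), π (2*t+2)} : Finset (Fin p)) then (1:ℝ) else 0) = 0 := by
      apply Finset.sum_eq_zero
      intro t ht
      rw [Finset.mem_range] at ht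
      have hne : S ≠ ({π (2*t), π (2*t+1), π (2*t+2)} : Finset (Fin p)) := by
        rw [hTodd t]
        exact hS (2*t+1) (by rw [Finset.mem_Icc]; omega)
      simp [hne]
    have hEe : (∑ t ∈ Finset.range m,
        if S = ({π (2*t+1), π (2*t+2), π (2*t+3)} : Finset (Fin p)) then (1:ℝ) else 0) = 0 := by
      apply Finset.sum_eq_zero
      intro t ht
      rw [Finset.mem_range] at ht
      have hne : S ≠ ({π (2*t+1), π (2*t+2), π (2*t+3)} : Finset (Fin p)) := by
        rw [hTeven t]
        exact hS (2*t+2) (by rw [Finset.mem_Icc]; omega)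
      simp [hne]
    rw [hO, hEe] at h
    linarith
  exact core_edge G htree D E hD hE (2*m) (by omega) π hinj hadj
    (fun j hj => (hvals j hj).1) (fun j hj => (hvals j hj).2) hoff
    (shiftwt m) (2*(m:ℝ)-1) (shift_sum_odd m hm) (shift_sum_even m hm) (shift_bound m hm)

lemma split_edge (G : SimpleGraph (Fin p)) (htree : G.IsTree)
    (D E : DAG (Fin p)) (hD : D.skeleton = G) (hE : E.skeleton = G)
    (h : IsSplit D E) :
    IsPolytopeEdge (CIM G) D.imset E.imset ∧ IsPolytopeEdge (CIM G) E.imset D.imset := by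
  obtain ⟨m, hm, π, hinj, hadjD, heq⟩ := h
  have hinst : (fun (a b : Fin p) => Classical.propDecidable (a = b)) = instDecidableEqFin p := by
    funext a b
    exact Subsingleton.elim _ _
  rw [hinst] at heq
  have hn1 : 2*m - 1 + 1 = 2*m := by omega
  have hinj2 : Set.InjOn π (Set.Iic (2*m-1+1)) := by rw [hn1]; exact hinj
  have hinj' : ∀ a b : ℕ, a ≤ 2*m-1+1 → b ≤ 2*m-1+1 → π a = π b → a = b := by
    intro a b ha hb hab
    exact hinj2 (Set.mem_Iic.2 ha) (Set.mem_Iic.2 hb) hab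
  have hadj : ∀ k < 2*m-1 + 1, G.Adj (π k) (π (k+1)) := by
    intro k hk
    have := hadjD k (by omega)
    rwa [hD] at this
  have htinj := T_inj (2*m-1) π hinj'
  have hval : ∀ S : Finset (Fin p),
      E.imset S - (∑ t ∈ Finset.range m,
          if S = ({π (2*t), π (2*t+1), π (2*t+2)} : Finset (Fin p)) then (1:ℝ) else 0)
        = D.imset S - (∑ t ∈ Finset.range (m-1),
          if S = ({π (2*t+1), π (2*t+2), π (2*t+3)} : Finset (Fin p)) then (1:ℝ) else 0) := by
    intro S
    have h := congrFun heq S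
    simp only [Pi.sub_apply, Finset.sum_apply, eVec_apply] at h
    exact h
  have hTodd : ∀ t : ℕ, ({π (2*t), π (2*t+1), π (2*t+2)} : Finset (Fin p))
      = {π ((2*t+1)-1), π (2*t+1), π ((2*t+1)+1)} := by
    intro t
    have e1 : (2*t+1)-1 = 2*t := by omega
    have e2 : (2*t+1)+1 = 2*t+2 := by omega
    rw [e1, e2]
  have hTeven : ∀ t : ℕ, ({π (2*t+1), π (2*t+2), π (2*t+3)} : Finset (Fin p))
      = {π ((2*t+2)-1), π (2*t+2), π ((2*t+2)+1)} := by
    intro t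
    have e1 : (2*t+2)-1 = 2*t+1 := by omega
    have e2 : (2*t+2)+1 = 2*t+3 := by omega
    rw [e1, e2]
  have hsumO : ∀ j ∈ Finset.Icc 1 (2*m-1),
      (∑ t ∈ Finset.range m,
          if ({π (j-1), π j, π (j+1)} : Finset (Fin p)) = ({π (2*t), π (2*t+1), π (2*t+2)} : Finset (Fin p)) then (1:ℝ) else 0)
        = if Odd j then 1 else 0 := by
    intro j hj
    have hmem : ∀ t ∈ Finset.range m, (2*t+1) ∈ Finset.Icc 1 (2*m-1) := by
      intro t ht; rw [Finset.mem_range] at ht; rw [Finset.mem_Icc]; omega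
    have hper : ∀ t ∈ Finset.range m,
        (if ({π (j-1), π j, π (j+1)} : Finset (Fin p)) = ({π (2*t), π (2*t+1), π (2*t+2)} : Finset (Fin p)) then (1:ℝ) else 0)
          = if j = 2*t+1 then 1 else 0 := by
      intro t ht
      rw [hTodd t]
      have hiff : (({π (j-1), π j, π (j+1)} : Finset (Fin p))
          = ({π ((2*t+1)-1), π (2*t+1), π ((2*t+1)+1)} : Finset (Fin p))) ↔ j = 2*t+1 :=
        ⟨fun hh => htinj j hj (2*t+1) (hmem t ht) hh, fun hh => by rw [hh]⟩
      simp only [hiff]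
    rw [Finset.sum_congr rfl hper]
    by_cases hodd : Odd j
    · have hodd2 := hodd
      obtain ⟨t₀, ht₀⟩ := hodd2
      have ht₀m : t₀ ∈ Finset.range m := by
        rw [Finset.mem_range]
        rw [Finset.mem_Icc] at hj
        omega
      have hper2 : ∀ t ∈ Finset.range m, (if j = 2*t+1 then (1:ℝ) else 0) = if t = t₀ then 1 else 0 := by
        intro t _
        have hiff2 : (j = 2*t+1) ↔ (t = t₀) := by omega
        simp only [hiff2]
      rw [Finset.sum_congr rfl hper2, Finset.sum_ite_eq' (Finset.range m) t₀ (fun _ => (1:ℝ)),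
        if_pos ht₀m, if_pos hodd]
    · have hper2 : ∀ t ∈ Finset.range m, (if j = 2*t+1 then (1:ℝ) else 0) = 0 := by
        intro t _
        have hne : ¬ (j = 2*t+1) := fun hc => hodd ⟨t, by omega⟩
        simp [hne]
      rw [Finset.sum_congr rfl hper2, if_neg hodd]
      simp
  have hsumE : ∀ j ∈ Finset.Icc 1 (2*m-1),
      (∑ t ∈ Finset.range (m-1),
          if ({π (j-1), π j, π (j+1)} : Finset (Fin p)) = ({π (2*t+1), π (2*t+2), π (2*t+3)} : Finset (Fin p)) then (1:ℝ) else 0)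
        = if Even j then 1 else 0 := by
    intro j hj
    have hmem : ∀ t ∈ Finset.range (m-1), (2*t+2) ∈ Finset.Icc 1 (2*m-1) := by
      intro t ht; rw [Finset.mem_range] at ht; rw [Finset.mem_Icc]; omega
    have hper : ∀ t ∈ Finset.range (m-1),
        (if ({π (j-1), π j, π (j+1)} : Finset (Fin p)) = ({π (2*t+1), π (2*t+2), π (2*t+3)} : Finset (Fin p)) then (1:ℝ) else 0)
          = if j = 2*t+2 then 1 else 0 := by
      intro t ht
      rw [hTeven t]
      have hiff : (({π (j-1), π j, π (j+1)} : Finset (Fin p))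
          = ({π ((2*t+2)-1), π (2*t+2), π ((2*t+2)+1)} : Finset (Fin p))) ↔ j = 2*t+2 :=
        ⟨fun hh => htinj j hj (2*t+2) (hmem t ht) hh, fun hh => by rw [hh]⟩
      simp only [hiff]
    rw [Finset.sum_congr rfl hper]
    by_cases heven : Even j
    · have heven2 := heven
      rw [Nat.even_iff] at heven2
      rw [Finset.mem_Icc] at hj
      have hper2 : ∀ t ∈ Finset.range (m-1), (if j = 2*t+2 then (1:ℝ) else 0) = if t = j/2-1 then 1 else 0 := by
        intro t _
        have hiff2 : (j = 2*t+2) ↔ (t = j/2-1) := by omega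
        simp only [hiff2]
      have ht₀m : j/2-1 ∈ Finset.range (m-1) := by
        rw [Finset.mem_range]
        omega
      rw [Finset.sum_congr rfl hper2, Finset.sum_ite_eq' (Finset.range (m-1)) (j/2-1) (fun _ => (1:ℝ)),
        if_pos ht₀m, if_pos heven]
    · have hper2 : ∀ t ∈ Finset.range (m-1), (if j = 2*t+2 then (1:ℝ) else 0) = 0 := by
        intro t _
        have hne : ¬ (j = 2*t+2) := fun hc => heven ⟨t+1, by omega⟩
        simp [hne]
      rw [Finset.sum_congr rfl hper2, if_neg heven]
      simp
  have hvals : ∀ j ∈ Finset.Icc 1 (2*m-1),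
      D.imset {π (j-1), π j, π (j+1)} = (if Even j then 1 else 0) ∧
      E.imset {π (j-1), π j, π (j+1)} = (if Odd j then 1 else 0) := by
    intro j hj
    have h := hval ({π (j-1), π j, π (j+1)} : Finset (Fin p))
    rw [hsumO j hj, hsumE j hj] at h
    rcases Nat.even_or_odd j with hpar | hpar
    · have hno : ¬ Odd j := by simp [Nat.even_iff, Nat.odd_iff] at hpar ⊢; omega
      rw [if_pos hpar, if_neg hno] at h ⊢
      rcases imset01 D {π (j-1), π j, π (j+1)} with h0|h0 <;>
        rcases imset01 E {π (j-1), π j, π (j+1)} with h1|h1 <;>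
        rw [h0, h1] at h <;> first | exact ⟨h0, h1⟩ | (norm_num at h)
    · have hno : ¬ Even j := by simp [Nat.even_iff, Nat.odd_iff] at hpar ⊢; omega
      rw [if_neg hno, if_pos hpar] at h ⊢
      rcases imset01 D {π (j-1), π j, π (j+1)} with h0|h0 <;>
        rcases imset01 E {π (j-1), π j, π (j+1)} with h1|h1 <;>
        rw [h0, h1] at h <;> first | exact ⟨h0, h1⟩ | (norm_num at h)
  have hoff : ∀ S : Finset (Fin p),
      (∀ j ∈ Finset.Icc 1 (2*m-1), S ≠ {π (j-1), π j, π (j+1)}) → D.imset S = E.imset S := by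
    intro S hS
    have h := hval S
    have hO : (∑ t ∈ Finset.range m,
        if S = ({π (2*t), π (2*t+1), π (2*t+2)} : Finset (Fin p)) then (1:ℝ) else 0) = 0 := by
      apply Finset.sum_eq_zero
      intro t ht
      rw [Finset.mem_range] at ht
      have hne : S ≠ ({π (2*t), π (2*t+1), π (2*t+2)} : Finset (Fin p)) := by
        rw [hTodd t]
        exact hS (2*t+1) (by rw [Finset.mem_Icc]; omega)
      simp [hne]
    have hEe : (∑ t ∈ Finset.range (m-1),
        if S = ({π (2*t+1), π (2*t+2), π (2*t+3)} : Finset (Fin p)) then (1:ℝ) else 0) = 0 := by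
      apply Finset.sum_eq_zero
      intro t ht
      rw [Finset.mem_range] at ht
      have hne : S ≠ ({π (2*t+1), π (2*t+2), π (2*t+3)} : Finset (Fin p)) := by
        rw [hTeven t]
        exact hS (2*t+2) (by rw [Finset.mem_Icc]; omega)
      simp [hne]
    rw [hO, hEe] at h
    linarith
  exact core_edge G htree D E hD hE (2*m-1) (by omega) π hinj2 hadj
    (fun j hj => (hvals j hj).1) (fun j hj => (hvals j hj).2) hoff
    (splitwt m) ((m:ℝ)*((m:ℝ)-1)) (split_sum_odd m hm) (split_sum_even m hm) (split_bound m hm)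

end Derive

end Helpers

/-- **Shifts and splits are edges.**  Let `D` and `E` be DAGs with common skeleton `G`, a
tree.  If the pair `{D, E}` is a shift or a split, then `conv(c_D, c_E)` is an edge of
`CIM_G`. -/
theorem shift_or_split_is_edge {p : ℕ} (G : SimpleGraph (Fin p)) (htree : G.IsTree)
    (D E : DAG (Fin p)) (hD : D.skeleton = G) (hE : E.skeleton = G)
    (h : IsShift D E ∨ IsShift E D ∨ IsSplit D E ∨ IsSplit E D) :
    IsPolytopeEdge (CIM G) D.imset E.imset := by
  rcases h with h | h | h | h
  · exact (shift_edge G htree D E hD hE h).1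
  · exact (shift_edge G htree E D hE hD h).2
  · exact (split_edge G htree D E hD hE h).1
  · exact (split_edge G htree E D hE hD h).2
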